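/- If D is a perfect dominating set of a finite graph G, then the two copies of D in the bipartite double cover of G form a perfect dominating set of the bipartite double cover. -/

import Mathlib

/-- The bipartite double cover of a graph. -/
def doubleCover {V : Type*} (G : SimpleGraph V) : SimpleGraph (V × Bool) where
  Adj p q := G.Adj p.1 q.1 ∧ p.2 ≠ q.2
  symm := by
    constructor
    rintro p q ⟨h1, h2⟩
    exact ⟨h1.symm, Ne.symm h2⟩
  loopless := by
    constructor
    rintro p ⟨h1, h2⟩
    exact h2 rfl

/-- `D` is a perfect dominating set: every vertex outside `D` has exactly one
neighbor in `D`. -/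
def perfectDominating {V : Type*} (G : SimpleGraph V) (D : Set V) : Prop :=
  ∀ v, v ∉ D → {u ∈ D | G.Adj v u}.ncard = 1

theorem stmt_16 {V : Type*} [Fintype V] [DecidableEq V] (G : SimpleGraph V)
    (D : Set V) (hD : perfectDominating G D) :
    perfectDominating (doubleCover G) (D ×ˢ (Set.univ : Set Bool)) := by
  rintro ⟨v, b⟩ hv
  have hvD : v ∉ D := fun h => hv ⟨h, Set.mem_univ b⟩
  have key : {p ∈ D ×ˢ (Set.univ : Set Bool) | (doubleCover G).Adj (v, b) p}
      = (fun u => (u, !b)) '' {u ∈ D | G.Adj v u} := by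
    ext ⟨u, c⟩
    simp only [Set.mem_setOf_eq, Set.mem_image, Set.mem_prod, Set.mem_univ,
      and_true, doubleCover, Prod.mk.injEq]
    constructor
    · rintro ⟨hu, ha, hne⟩
      exact ⟨u, ⟨hu, ha⟩, rfl, by
        cases b <;> cases c <;> simp_all⟩
    · rintro ⟨w, ⟨hw, ha⟩, rfl, rfl⟩
      exact ⟨hw, ha, by cases b <;> simp⟩
  rw [key, Set.ncard_image_of_injective _ (fun x y h => (Prod.mk.injEq ..).mp h |>.1)]
  exact hD v hvD
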